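/- Given n×n matrices X and Y, there exist unitary matrices V and W such that |X + Y| ≤ V |X| V* + W |Y| W* in the Löwner order. -/

import Mathlib

open Matrix
open scoped ComplexOrder

noncomputable section

/-- The square root of a positive semidefinite matrix, as defined in the older Mathlib -/
noncomputable def Matrix.PosSemidef.sqrt {n 𝕜 : Type*} [Fintype n] [DecidableEq n] [RCLike 𝕜]
    {A : Matrix n n 𝕜} (hA : A.PosSemidef) : Matrix n n 𝕜 :=
  hA.1.eigenvectorUnitary.1 * diagonal ((↑) ∘ (√·) ∘ hA.1.eigenvalues) *
  (star hA.1.eigenvectorUnitary : Matrix n n 𝕜)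

theorem Matrix.PosSemidef.isHermitian_sqrt {n 𝕜 : Type*} [Fintype n] [DecidableEq n] [RCLike 𝕜]
    {A : Matrix n n 𝕜} (hA : A.PosSemidef) : hA.sqrt.IsHermitian := by
  unfold Matrix.PosSemidef.sqrt IsHermitian
  simp [conjTranspose_mul, Matrix.mul_assoc, diagonal_conjTranspose, Function.comp_def,
    star_eq_conjTranspose, Pi.star_def, RCLike.star_def, RCLike.conj_ofReal]

/-- n×n complex matrices -/
abbrev Mat (n : ℕ) := Matrix (Fin n) (Fin n) ℂ

/-- modulus |A| = sqrt (Aᴴ A) -/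
noncomputable def matAbs {n : ℕ} (A : Mat n) : Mat n :=
  (Matrix.posSemidef_conjTranspose_mul_self A).sqrt

/-- spectral (operator) norm -/
noncomputable def specNorm {n : ℕ} (A : Mat n) : ℝ :=
  ‖Matrix.toEuclideanCLM (𝕜 := ℂ) (n := Fin n) A‖

/-- Löwner order: `A ≤ B` iff `B - A` is positive semidefinite -/
def loewnerLE {n : ℕ} (A B : Mat n) : Prop := (B - A).PosSemidef

/-- singular values of `A`, arranged in non-increasing order -/
noncomputable def sval {n : ℕ} (A : Mat n) : Fin n → ℝ :=
  fun i =>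
    let e := ((Matrix.posSemidef_conjTranspose_mul_self A).isHermitian_sqrt).eigenvalues
    (e ∘ Tuple.sort e) i.rev

/-- singular values indexed by naturals (0 beyond the size) -/
noncomputable def svalNat {n : ℕ} (A : Mat n) (k : ℕ) : ℝ :=
  if h : k < n then sval A ⟨k, h⟩ else 0

/-- eigenvalues of a Hermitian matrix, arranged in non-increasing order -/
noncomputable def eigsDesc {n : ℕ} {A : Mat n} (hA : A.IsHermitian) : Fin n → ℝ :=
  fun i => (hA.eigenvalues ∘ Tuple.sort hA.eigenvalues) i.rev

open scoped MatrixOrder in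
lemma Matrix.PosSemidef.sqrt_eq_cfcSqrt {n : ℕ} {A : Mat n} (hA : A.PosSemidef) :
    hA.sqrt = CFC.sqrt A := by
  rw [CFC.sqrt_eq_cfc, cfc_nnreal_eq_real _ A hA.nonneg, hA.1.cfc_eq]
  simp [Matrix.PosSemidef.sqrt, IsHermitian.cfc, Function.comp_def,
    fun x => max_eq_left (hA.eigenvalues_nonneg x)]

open scoped MatrixOrder in
lemma Matrix.PosSemidef.posSemidef_sqrt {n : ℕ} {A : Mat n} (hA : A.PosSemidef) :
    hA.sqrt.PosSemidef := by
  rw [hA.sqrt_eq_cfcSqrt]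
  exact (CFC.sqrt_nonneg A).posSemidef

open scoped MatrixOrder in
lemma Matrix.PosSemidef.sqrt_mul_self {n : ℕ} {A : Mat n} (hA : A.PosSemidef) :
    hA.sqrt * hA.sqrt = A := by
  rw [hA.sqrt_eq_cfcSqrt]
  exact CFC.sqrt_mul_sqrt_self A hA.nonneg

open scoped MatrixOrder in
lemma Matrix.PosSemidef.eq_sqrt_of_sq_eq {n : ℕ} {A : Mat n} (hA : A.PosSemidef) (B : Mat n)
    (hB : B.PosSemidef) (hAB : A ^ 2 = B) : A = hB.sqrt := by
  rw [hB.sqrt_eq_cfcSqrt, eq_comm]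
  exact CFC.sqrt_unique (by rw [← hAB, pow_two]) hA.nonneg

section ThompsonHelpers

variable {n : ℕ}

abbrev Euc (n : ℕ) := EuclideanSpace ℂ (Fin n)

lemma matAbs_posSemidef (A : Mat n) : (matAbs A).PosSemidef :=
  (Matrix.posSemidef_conjTranspose_mul_self A).posSemidef_sqrt

lemma matAbs_mul_self (A : Mat n) : matAbs A * matAbs A = Aᴴ * A :=
  (Matrix.posSemidef_conjTranspose_mul_self A).sqrt_mul_self

lemma matAbs_unitary_mul {U : Mat n} (hU : U ∈ Matrix.unitaryGroup (Fin n) ℂ) (A : Mat n) :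
    matAbs (U * A) = matAbs A := by
  symm
  apply (matAbs_posSemidef A).eq_sqrt_of_sq_eq
  have h1 : Uᴴ * U = 1 := by
    simpa [Matrix.star_eq_conjTranspose] using Unitary.star_mul_self_of_mem hU
  rw [pow_two, matAbs_mul_self, conjTranspose_mul, Matrix.mul_assoc, ← Matrix.mul_assoc Uᴴ U A,
    h1, Matrix.one_mul]

/-- matrix whose columns are an orthonormal basis -/
def obU (b : OrthonormalBasis (Fin n) ℂ (Euc n)) : Mat n :=
  (EuclideanSpace.basisFun (Fin n) ℂ).toBasis.toMatrix b.toBasis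

lemma obU_mem_unitary (b : OrthonormalBasis (Fin n) ℂ (Euc n)) :
    obU b ∈ Matrix.unitaryGroup (Fin n) ℂ :=
  (EuclideanSpace.basisFun (Fin n) ℂ).toMatrix_orthonormalBasis_mem_unitary b

lemma obU_apply (b : OrthonormalBasis (Fin n) ℂ (Euc n)) (i j : Fin n) :
    obU b i j = b j i := rfl

lemma obU_mulVec_single (b : OrthonormalBasis (Fin n) ℂ (Euc n)) (j : Fin n) :
    obU b *ᵥ Pi.single j 1 = ⇑(b j) := by
  simp only [mulVec_single, obU_apply, mul_one]
  ext i
  simp [obU_apply]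

lemma star_obU_mulVec (b : OrthonormalBasis (Fin n) ℂ (Euc n)) (j : Fin n) :
    (star (obU b)) *ᵥ ⇑(b j) = Pi.single j 1 := by
  rw [← obU_mulVec_single, mulVec_mulVec, Unitary.star_mul_self_of_mem (obU_mem_unitary b), one_mulVec]

lemma ext_of_mulVec_basis {A B : Mat n} (b : OrthonormalBasis (Fin n) ℂ (Euc n))
    (h : ∀ j, A *ᵥ ⇑(b j) = B *ᵥ ⇑(b j)) : A = B := by
  apply Matrix.toEuclideanLin.injective
  apply Module.Basis.ext b.toBasis
  intro j
  simp only [Matrix.toEuclideanLin_apply, OrthonormalBasis.coe_toBasis]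
  congr 1
  exact h j

lemma spectral_basis (b : OrthonormalBasis (Fin n) ℂ (Euc n)) (d : Fin n → ℝ) {A : Mat n}
    (h : ∀ j, A *ᵥ ⇑(b j) = (d j : ℂ) • ⇑(b j)) :
    A = obU b * diagonal (fun i => (d i : ℂ)) * (obU b)ᴴ := by
  apply ext_of_mulVec_basis b
  intro j
  rw [h j, ← Matrix.star_eq_conjTranspose, ← mulVec_mulVec, ← mulVec_mulVec,
    star_obU_mulVec, Matrix.diagonal_mulVec_single]
  have : (Pi.single j ((fun i => (d i : ℂ)) j * 1) : Fin n → ℂ)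
      = (d j : ℂ) • (Pi.single j 1 : Fin n → ℂ) := by
    ext k
    by_cases hk : k = j <;> simp [hk, Pi.single_apply]
  rw [this, mulVec_smul, obU_mulVec_single]

lemma inner_dot (x y : Euc n) : (inner ℂ x y : ℂ) = dotProduct (star ⇑x) ⇑y :=
  by rw [EuclideanSpace.inner_eq_star_dotProduct, dotProduct_comm]

lemma dot_mulVec_eq (C : Mat n) (x y : Euc n) :
    (inner ℂ ((WithLp.equiv 2 _).symm (C *ᵥ ⇑x) : Euc n) ((WithLp.equiv 2 _).symm (C *ᵥ ⇑y) : Euc n) : ℂ)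
      = dotProduct (star ⇑x) ((Cᴴ * C) *ᵥ ⇑y) := by
  rw [inner_dot]
  simp only [WithLp.equiv_symm_apply, WithLp.ofLp_toLp]
  rw [Matrix.star_mulVec, ← Matrix.mulVec_mulVec]
  simp [dotProduct_mulVec, Matrix.vecMul_vecMul]

lemma polar_decomp (C : Mat n) : ∃ U ∈ Matrix.unitaryGroup (Fin n) ℂ, C = U * matAbs C := by
  classical
  set H := matAbs C with hHdef
  have hH : H.PosSemidef := matAbs_posSemidef C
  have hHerm : H.IsHermitian := hH.1
  set μ := hHerm.eigenvalues with hμdef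
  set v := hHerm.eigenvectorBasis with hvdef
  have hHv : ∀ j, H *ᵥ ⇑(v j) = (μ j : ℂ) • ⇑(v j) := fun j => hHerm.mulVec_eigenvectorBasis j
  have hCC : Cᴴ * C = H * H := (matAbs_mul_self C).symm
  -- inner products of images
  have hinner : ∀ i j, (inner ℂ ((WithLp.equiv 2 _).symm (C *ᵥ ⇑(v i)) : Euc n)
      ((WithLp.equiv 2 _).symm (C *ᵥ ⇑(v j)) : Euc n) : ℂ)
      = ((μ j : ℂ))^2 * (inner ℂ (v i) (v j) : ℂ) := by
    intro i j
    rw [dot_mulVec_eq, hCC, ← Matrix.mulVec_mulVec, hHv j, Matrix.mulVec_smul, hHv j,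
      inner_dot]
    simp only [dotProduct_smul, smul_smul, smul_eq_mul]
    ring
  have hortho : ∀ i j, (inner ℂ ((WithLp.equiv 2 _).symm (C *ᵥ ⇑(v i)) : Euc n)
      ((WithLp.equiv 2 _).symm (C *ᵥ ⇑(v j)) : Euc n) : ℂ)
      = ((μ j : ℂ))^2 * (if i = j then 1 else 0) := by
    intro i j
    rw [hinner i j, orthonormal_iff_ite.mp v.orthonormal i j]
  set s : Set (Fin n) := {i | μ i ≠ 0} with hsdef
  set w : Fin n → Euc n :=
    fun i => ((μ i : ℂ))⁻¹ • ((WithLp.equiv 2 _).symm (C *ᵥ ⇑(v i)) : Euc n) with hwdef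
  have hwortho : Orthonormal ℂ (s.domRestrict w) := by
    rw [orthonormal_iff_ite]
    rintro ⟨i, hi⟩ ⟨j, hj⟩
    simp only [Set.domRestrict_apply, hwdef, inner_smul_left, inner_smul_right, hortho i j]
    have hconj : (starRingEnd ℂ) ((μ i : ℂ))⁻¹ = ((μ i : ℂ))⁻¹ := by
      rw [map_inv₀, Complex.conj_ofReal]
    rw [hconj]
    have hi' : (μ i : ℂ) ≠ 0 := by exact_mod_cast Complex.ofReal_ne_zero.mpr hi
    have hj' : (μ j : ℂ) ≠ 0 := by exact_mod_cast Complex.ofReal_ne_zero.mpr hj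
    by_cases hij : i = j
    · subst hij
      simp only [if_pos rfl]
      field_simp
    · have hne : (⟨i, hi⟩ : ↥s) ≠ ⟨j, hj⟩ := by simpa using hij
      simp only [if_neg hij, if_neg hne]
      ring
  obtain ⟨b, hb⟩ := hwortho.exists_orthonormalBasis_extension_of_card_eq
    (finrank_euclideanSpace (𝕜 := ℂ) (ι := Fin n))
  -- the zero eigenvalue case : C *ᵥ v j = 0
  have hzero : ∀ j, μ j = 0 → C *ᵥ ⇑(v j) = 0 := by
    intro j hj
    have h0 : (inner ℂ ((WithLp.equiv 2 _).symm (C *ᵥ ⇑(v j)) : Euc n)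
        ((WithLp.equiv 2 _).symm (C *ᵥ ⇑(v j)) : Euc n) : ℂ) = 0 := by
      rw [hortho j j, hj]; simp
    have := inner_self_eq_zero.mp h0
    have : (WithLp.equiv 2 (Fin n → ℂ)).symm (C *ᵥ ⇑(v j)) = 0 := this
    simpa using congrArg (WithLp.equiv 2 (Fin n → ℂ)) this
  set P : Mat n := (hHerm.eigenvectorUnitary : Mat n) with hPdef
  refine ⟨obU b * Pᴴ, ?_, ?_⟩
  · exact mul_mem (obU_mem_unitary b) (by
      rw [← Matrix.star_eq_conjTranspose]
      exact Unitary.star_mem hHerm.eigenvectorUnitary.prop)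
  · apply ext_of_mulVec_basis v
    intro j
    have h1 : Pᴴ *ᵥ ⇑(v j) = Pi.single j 1 := by
      rw [← Matrix.star_eq_conjTranspose]
      exact hHerm.star_eigenvectorUnitary_mulVec j
    rw [← Matrix.mulVec_mulVec, hHv j, Matrix.mulVec_smul, ← Matrix.mulVec_mulVec, h1,
      obU_mulVec_single]
    by_cases hj : j ∈ s
    · have hbj := hb j hj
      rw [hbj]
      have hwj : ⇑(w j) = ((μ j : ℂ))⁻¹ • (C *ᵥ ⇑(v j)) := by
        simp [hwdef]
      rw [hwj, smul_smul]
      have hj' : (μ j : ℂ) ≠ 0 := Complex.ofReal_ne_zero.mpr hj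
      rw [mul_inv_cancel₀ hj', one_smul]
    · have hj0 : μ j = 0 := by simpa [hsdef] using hj
      rw [hzero j hj0, hj0]
      simp
lemma repr_eq_zero_of_not_mem (b : OrthonormalBasis (Fin n) ℂ (Euc n)) {t : Set (Fin n)}
    {x : Euc n} (hx : x ∈ Submodule.span ℂ (⇑b '' t)) {j : Fin n} (hj : j ∉ t) :
    b.repr x j = 0 := by
  have key : ∀ y ∈ Submodule.span ℂ (⇑b '' t), (inner ℂ (b j) y : ℂ) = 0 := by
    intro y hy
    induction hy using Submodule.span_induction with
    | mem y hy =>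
      obtain ⟨k, hk, rfl⟩ := hy
      have hjk : j ≠ k := fun h => hj (h ▸ hk)
      simpa [if_neg hjk] using orthonormal_iff_ite.mp b.orthonormal j k
    | zero => simp
    | add y z _ _ hy hz => rw [inner_add_right, hy, hz, add_zero]
    | smul a y _ hy => rw [inner_smul_right, hy, mul_zero]
  rw [b.repr_apply_apply]
  exact key x hx

lemma dot_eq_sum (b : OrthonormalBasis (Fin n) ℂ (Euc n)) (d : Fin n → ℝ) {M : Mat n}
    (hM : M.IsHermitian) (h : ∀ k, M *ᵥ ⇑(b k) = (d k : ℂ) • ⇑(b k)) (x : Euc n) :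
    dotProduct (star ⇑x) (M *ᵥ ⇑x)
      = ((∑ k, d k * Complex.normSq (b.repr x k) : ℝ) : ℂ) := by
  set y : Euc n := (WithLp.equiv 2 _).symm (M *ᵥ ⇑x) with hy
  have h1 : dotProduct (star ⇑x) (M *ᵥ ⇑x) = (inner ℂ x y : ℂ) := by
    rw [inner_dot]; simp [hy]
  have hrepr : ∀ k, b.repr y k = (d k : ℂ) * b.repr x k := by
    intro k
    rw [b.repr_apply_apply, b.repr_apply_apply, inner_dot, inner_dot]
    simp only [hy, WithLp.equiv_symm_apply, WithLp.ofLp_toLp]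
    rw [dotProduct_mulVec]
    have h2 : star ⇑(b k) ᵥ* M = (d k : ℂ) • star ⇑(b k) := by
      have h3 := congrArg star (h k)
      rw [Matrix.star_mulVec, hM.eq, star_smul] at h3
      rw [h3]
      congr 1
      rw [Complex.star_def, Complex.conj_ofReal]
    rw [h2, smul_dotProduct, smul_eq_mul]
  have h4 : (inner ℂ x y : ℂ) = ∑ k, (starRingEnd ℂ) (b.repr x k) * b.repr y k := by
    rw [← b.repr.inner_map_map x y, inner_dot]
    rfl
  rw [h1, h4]
  push_cast
  refine Finset.sum_congr rfl fun k _ => ?_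
  rw [hrepr k]
  have : (starRingEnd ℂ) (b.repr x k) * ((d k : ℂ) * b.repr x k)
      = (d k : ℂ) * ((starRingEnd ℂ) (b.repr x k) * b.repr x k) := by ring
  rw [this, ← Complex.normSq_eq_conj_mul_self]
lemma re_part_le (C : Mat n) : ∃ V ∈ Matrix.unitaryGroup (Fin n) ℂ,
    ((V * matAbs C * Vᴴ) - (2⁻¹ : ℂ) • (C + Cᴴ)).PosSemidef := by
  classical
  set H := matAbs C with hHdef
  have hH : H.PosSemidef := matAbs_posSemidef C
  set S : Mat n := (2⁻¹ : ℂ) • (C + Cᴴ) with hSdef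
  have hS : S.IsHermitian := by
    unfold Matrix.IsHermitian
    rw [hSdef, Matrix.conjTranspose_smul, Matrix.conjTranspose_add,
      Matrix.conjTranspose_conjTranspose, add_comm Cᴴ C]
    congr 1
    simp [Complex.ext_iff]
  set τ : Equiv.Perm (Fin n) := Tuple.sort hS.eigenvalues with hτdef
  set σ : Equiv.Perm (Fin n) := Tuple.sort hH.1.eigenvalues with hσdef
  set lam : Fin n → ℝ := hS.eigenvalues ∘ τ with hlamdef
  set mu : Fin n → ℝ := hH.1.eigenvalues ∘ σ with hmudef
  have hlam_mono : Monotone lam := Tuple.monotone_sort _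
  have hmu_mono : Monotone mu := Tuple.monotone_sort _
  have hmu_nonneg : ∀ k, 0 ≤ mu k := fun k => hH.eigenvalues_nonneg _
  set b1 := hS.eigenvectorBasis.reindex τ.symm with hb1def
  set b2 := hH.1.eigenvectorBasis.reindex σ.symm with hb2def
  have hb1 : ∀ k, S *ᵥ ⇑(b1 k) = (lam k : ℂ) • ⇑(b1 k) := by
    intro k
    rw [hb1def, OrthonormalBasis.reindex_apply, Equiv.symm_symm]
    exact hS.mulVec_eigenvectorBasis (τ k)
  have hb2 : ∀ k, H *ᵥ ⇑(b2 k) = (mu k : ℂ) • ⇑(b2 k) := by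
    intro k
    rw [hb2def, OrthonormalBasis.reindex_apply, Equiv.symm_symm]
    exact hH.1.mulVec_eigenvectorBasis (σ k)
  have hH2herm : (H * H).IsHermitian := by
    rw [hHdef, matAbs_mul_self C]
    exact Matrix.isHermitian_conjTranspose_mul_self C
  have hb2' : ∀ k, (H * H) *ᵥ ⇑(b2 k) = ((mu k ^ 2 : ℝ) : ℂ) • ⇑(b2 k) := by
    intro k
    rw [← Matrix.mulVec_mulVec, hb2 k, Matrix.mulVec_smul, hb2 k, smul_smul]
    push_cast
    rw [pow_two]
  -- the eigenvalue comparison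
  have key : ∀ i, lam i ≤ mu i := by
    intro i
    set E := Submodule.span ℂ (⇑b1 '' Set.Ici i) with hEdef
    set F := Submodule.span ℂ (⇑b2 '' Set.Iic i) with hFdef
    have hE : Module.finrank ℂ E = n - i := by
      rw [hEdef, Set.image_eq_range,
        show (Set.range fun x : ↥(Set.Ici i) => b1 ↑x)
          = Set.range (⇑b1 ∘ fun a : ↥(Set.Ici i) => (↑a : Fin n)) from rfl,
        finrank_span_eq_card ((b1.orthonormal.comp _ Subtype.coe_injective).linearIndependent)]
      rw [Fintype.card_subtype]; simp [Finset.filter_le_eq_Ici]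
    have hF : Module.finrank ℂ F = i + 1 := by
      rw [hFdef, Set.image_eq_range,
        show (Set.range fun x : ↥(Set.Iic i) => b2 ↑x)
          = Set.range (⇑b2 ∘ fun a : ↥(Set.Iic i) => (↑a : Fin n)) from rfl,
        finrank_span_eq_card ((b2.orthonormal.comp _ Subtype.coe_injective).linearIndependent)]
      rw [Fintype.card_subtype]; simp [Finset.filter_ge_eq_Iic]
    have hinf : E ⊓ F ≠ ⊥ := by
      intro hbot
      have h1 := Submodule.finrank_sup_add_finrank_inf_eq E F
      have h2 : Module.finrank ℂ ↥(E ⊔ F) ≤ n := by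
        have := Submodule.finrank_le (E ⊔ F)
        rwa [finrank_euclideanSpace, Fintype.card_fin] at this
      rw [hbot, finrank_bot, add_zero, hE, hF] at h1
      have : (i : ℕ) < n := i.isLt
      omega
    obtain ⟨x, hxEF, hx0⟩ := Submodule.exists_mem_ne_zero_of_ne_bot hinf
    obtain ⟨hxE, hxF⟩ := Submodule.mem_inf.mp hxEF
    set c1 : Fin n → ℝ := fun k => Complex.normSq (b1.repr x k) with hc1def
    set c2 : Fin n → ℝ := fun k => Complex.normSq (b2.repr x k) with hc2def
    have hc1z : ∀ k, ¬ i ≤ k → c1 k = 0 := by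
      intro k hk
      have h0 := repr_eq_zero_of_not_mem b1 hxE (j := k) (by simpa using hk)
      simp [hc1def, h0]
    have hc2z : ∀ k, ¬ k ≤ i → c2 k = 0 := by
      intro k hk
      have h0 := repr_eq_zero_of_not_mem b2 hxF (j := k) (by simpa using hk)
      simp [hc2def, h0]
    have hone : ∀ (b : OrthonormalBasis (Fin n) ℂ (Euc n)),
        dotProduct (star ⇑x) ((1 : Mat n) *ᵥ ⇑x)
          = ((∑ k, Complex.normSq (b.repr x k) : ℝ) : ℂ) := by
      intro b
      rw [dot_eq_sum b (fun _ => 1) Matrix.isHermitian_one (fun k => by simp) x]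
      norm_num
    have hNx : dotProduct (star ⇑x) ⇑x = ((‖x‖ ^ 2 : ℝ) : ℂ) := by
      rw [← inner_dot x x, @inner_self_eq_norm_sq_to_K ℂ]
      norm_num
    set N : ℝ := ‖x‖ ^ 2 with hNdef
    have hNpos : 0 < N := by
      rw [hNdef]
      exact pow_pos (norm_pos_iff.mpr hx0) 2
    have hsum1 : ∑ k, c1 k = N := by
      have := hone b1
      rw [Matrix.one_mulVec, hNx] at this
      exact_mod_cast (Complex.ofReal_inj.mp this).symm
    have hsum2 : ∑ k, c2 k = N := by
      have := hone b2
      rw [Matrix.one_mulVec, hNx] at this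
      exact_mod_cast (Complex.ofReal_inj.mp this).symm
    -- lower bound on Re <x, Sx>
    have hSx : dotProduct (star ⇑x) (S *ᵥ ⇑x) = ((∑ k, lam k * c1 k : ℝ) : ℂ) :=
      dot_eq_sum b1 lam hS hb1 x
    have hlower : lam i * N ≤ ∑ k, lam k * c1 k := by
      rw [← hsum1, Finset.mul_sum]
      refine Finset.sum_le_sum fun k _ => ?_
      by_cases hk : i ≤ k
      · exact mul_le_mul_of_nonneg_right (hlam_mono hk) (Complex.normSq_nonneg _)
      · rw [hc1z k hk]; simp
    -- upper bound on |C x|²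
    have hHx : dotProduct (star ⇑x) ((H * H) *ᵥ ⇑x)
        = ((∑ k, mu k ^ 2 * c2 k : ℝ) : ℂ) :=
      dot_eq_sum b2 (fun k => mu k ^ 2) hH2herm hb2' x
    have hupper : ∑ k, mu k ^ 2 * c2 k ≤ mu i ^ 2 * N := by
      rw [← hsum2, Finset.mul_sum]
      refine Finset.sum_le_sum fun k _ => ?_
      by_cases hk : k ≤ i
      · exact mul_le_mul_of_nonneg_right
          (pow_le_pow_left₀ (hmu_nonneg k) (hmu_mono hk) 2) (Complex.normSq_nonneg _)
      · rw [hc2z k hk]; simp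
    -- the vector z = C x
    set z : Euc n := (WithLp.equiv 2 _).symm (C *ᵥ ⇑x) with hzdef
    have hz2 : ‖z‖ ^ 2 = ∑ k, mu k ^ 2 * c2 k := by
      have h1 : (inner ℂ z z : ℂ) = ((∑ k, mu k ^ 2 * c2 k : ℝ) : ℂ) := by
        rw [hzdef, dot_mulVec_eq C x x, ← matAbs_mul_self C, ← hHdef, hHx]
      have h2 : (inner ℂ z z : ℂ) = ((‖z‖ ^ 2 : ℝ) : ℂ) := by
        rw [@inner_self_eq_norm_sq_to_K ℂ]
        norm_num
      rw [h2] at h1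
      exact_mod_cast h1
    have hzn : ‖z‖ ≤ mu i * ‖x‖ := by
      have h2 : ‖z‖ ^ 2 ≤ (mu i * ‖x‖) ^ 2 := by
        rw [hz2, mul_pow]
        exact hupper
      have := Real.sqrt_le_sqrt h2
      rwa [Real.sqrt_sq (norm_nonneg z), Real.sqrt_sq (mul_nonneg (hmu_nonneg i) (norm_nonneg x))] at this
    -- Re <x, Sx> = Re <x, Cx>
    have hre : (dotProduct (star ⇑x) (S *ᵥ ⇑x)).re
        = (dotProduct (star ⇑x) (C *ᵥ ⇑x)).re := by
      rw [hSdef]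
      rw [Matrix.smul_mulVec, Matrix.add_mulVec, dotProduct_smul,
        dotProduct_add]
      have hconj : dotProduct (star ⇑x) (Cᴴ *ᵥ ⇑x)
          = (starRingEnd ℂ) (dotProduct (star ⇑x) (C *ᵥ ⇑x)) := by
        rw [dotProduct_mulVec, ← Matrix.star_mulVec, Matrix.star_dotProduct,
          starRingEnd_apply]
      rw [hconj]
      set w := dotProduct (star ⇑x) (C *ᵥ ⇑x)
      rw [Complex.add_conj]
      simp
    -- Cauchy-Schwarz
    have hcs : (dotProduct (star ⇑x) (C *ᵥ ⇑x)).re ≤ ‖x‖ * ‖z‖ := by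
      have h1 : dotProduct (star ⇑x) (C *ᵥ ⇑x) = (inner ℂ x z : ℂ) := by
        rw [inner_dot]
        simp [hzdef]
      rw [h1]
      calc (inner ℂ x z : ℂ).re ≤ ‖(inner ℂ x z : ℂ)‖ := Complex.re_le_norm _
        _ = ‖(inner ℂ x z : ℂ)‖ := rfl
        _ ≤ ‖x‖ * ‖z‖ := norm_inner_le_norm x z
    -- combine
    have hchain : lam i * N ≤ mu i * N := by
      calc lam i * N ≤ ∑ k, lam k * c1 k := hlower
        _ = (dotProduct (star ⇑x) (S *ᵥ ⇑x)).re := by rw [hSx]; simp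
        _ = (dotProduct (star ⇑x) (C *ᵥ ⇑x)).re := hre
        _ ≤ ‖x‖ * ‖z‖ := hcs
        _ ≤ ‖x‖ * (mu i * ‖x‖) := by
            exact mul_le_mul_of_nonneg_left hzn (norm_nonneg x)
        _ = mu i * N := by rw [hNdef]; ring
    exact le_of_mul_le_mul_right hchain hNpos
  -- construct the unitary and conclude
  refine ⟨obU b1 * (obU b2)ᴴ, ?_, ?_⟩
  · refine mul_mem (obU_mem_unitary b1) ?_
    rw [← Matrix.star_eq_conjTranspose]
    exact Unitary.star_mem (obU_mem_unitary b2)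
  · have hSspec : S = obU b1 * Matrix.diagonal (fun k => (lam k : ℂ)) * (obU b1)ᴴ :=
      spectral_basis b1 lam hb1
    have hHspec : H = obU b2 * Matrix.diagonal (fun k => (mu k : ℂ)) * (obU b2)ᴴ :=
      spectral_basis b2 mu hb2
    have hB2 : (obU b2)ᴴ * obU b2 = 1 := by
      simpa [Matrix.star_eq_conjTranspose] using
        Unitary.star_mul_self_of_mem (obU_mem_unitary b2)
    have hconj : (obU b1 * (obU b2)ᴴ) * H * (obU b1 * (obU b2)ᴴ)ᴴ
        = obU b1 * Matrix.diagonal (fun k => (mu k : ℂ)) * (obU b1)ᴴ := by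
      rw [hHspec, Matrix.conjTranspose_mul, Matrix.conjTranspose_conjTranspose]
      calc obU b1 * (obU b2)ᴴ * (obU b2 * Matrix.diagonal (fun k => (mu k : ℂ)) * (obU b2)ᴴ)
          * (obU b2 * (obU b1)ᴴ)
          = obU b1 * (((obU b2)ᴴ * obU b2) * Matrix.diagonal (fun k => (mu k : ℂ))
            * ((obU b2)ᴴ * obU b2)) * (obU b1)ᴴ := by
            simp only [Matrix.mul_assoc]
        _ = obU b1 * Matrix.diagonal (fun k => (mu k : ℂ)) * (obU b1)ᴴ := by
            rw [hB2, Matrix.one_mul, Matrix.mul_one, Matrix.mul_assoc]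
    rw [hconj, hSspec]
    have hdiff : obU b1 * Matrix.diagonal (fun k => (mu k : ℂ)) * (obU b1)ᴴ
        - obU b1 * Matrix.diagonal (fun k => (lam k : ℂ)) * (obU b1)ᴴ
        = obU b1 * Matrix.diagonal (fun k => ((mu k - lam k : ℝ) : ℂ)) * (obU b1)ᴴ := by
      rw [← Matrix.sub_mul, ← Matrix.mul_sub, Matrix.diagonal_sub]
      push_cast
      rfl
    rw [hdiff]
    refine Matrix.PosSemidef.mul_mul_conjTranspose_same ?_ (obU b1)
    rw [Matrix.posSemidef_diagonal_iff]
    intro k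
    rw [Complex.zero_le_real]
    linarith [key k]

end ThompsonHelpers

theorem stmt2 {n : ℕ} (X Y : Mat n) :
    ∃ V W : Matrix.unitaryGroup (Fin n) ℂ,
      loewnerLE (matAbs (X + Y))
        ((V : Mat n) * matAbs X * (V : Mat n)ᴴ + (W : Mat n) * matAbs Y * (W : Mat n)ᴴ) := by
  classical
  obtain ⟨U, hU, hpolar⟩ := polar_decomp (X + Y)
  set H := matAbs (X + Y) with hHdef
  have hH : H.PosSemidef := matAbs_posSemidef _
  have hUstar : Uᴴ ∈ Matrix.unitaryGroup (Fin n) ℂ := by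
    rw [← Matrix.star_eq_conjTranspose]; exact Unitary.star_mem hU
  have hUU : Uᴴ * U = 1 := by
    simpa [Matrix.star_eq_conjTranspose] using Unitary.star_mul_self_of_mem hU
  have hHeq : Uᴴ * X + Uᴴ * Y = H := by
    have := congrArg (fun M => Uᴴ * M) hpolar
    rw [← Matrix.mul_assoc, hUU, Matrix.one_mul] at this
    rw [← Matrix.mul_add, ← this]
  obtain ⟨V, hV, hV2⟩ := re_part_le (Uᴴ * X)
  obtain ⟨W, hW, hW2⟩ := re_part_le (Uᴴ * Y)
  rw [matAbs_unitary_mul hUstar] at hV2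
  rw [matAbs_unitary_mul hUstar] at hW2
  refine ⟨⟨V, hV⟩, ⟨W, hW⟩, ?_⟩
  unfold loewnerLE
  have hsplit : V * matAbs X * Vᴴ + W * matAbs Y * Wᴴ - H
      = (V * matAbs X * Vᴴ - (2⁻¹ : ℂ) • (Uᴴ * X + (Uᴴ * X)ᴴ))
        + (W * matAbs Y * Wᴴ - (2⁻¹ : ℂ) • (Uᴴ * Y + (Uᴴ * Y)ᴴ)) := by
    have hHerm : H = (2⁻¹ : ℂ) • (Uᴴ * X + (Uᴴ * X)ᴴ) + (2⁻¹ : ℂ) • (Uᴴ * Y + (Uᴴ * Y)ᴴ) := by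
      rw [← smul_add]
      have : Uᴴ * X + (Uᴴ * X)ᴴ + (Uᴴ * Y + (Uᴴ * Y)ᴴ)
          = (Uᴴ * X + Uᴴ * Y) + (Uᴴ * X + Uᴴ * Y)ᴴ := by
        rw [Matrix.conjTranspose_add]
        abel
      rw [this, hHeq, hH.1.eq, ← two_smul ℂ H, smul_smul]
      norm_num
    rw [hHerm]
    abel
  rw [hsplit]
  exact Matrix.PosSemidef.add hV2 hW2

end
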